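/- For each k ≥ 1, if (x,y,z) ∈ ℝ³ satisfies x² + y² + z² − 2xyz = 1 + λ²/4 with λ > 0, then the first two coordinates of T_k(x,y,z) = (x U_k(y) − z U_{k-1}(y), x U_{k-1}(y) − z U_{k-2}(y), y) satisfy: (x U_k(y) − z U_{k-1}(y))² + y² + (x U_{k-1}(y) − z U_{k-2}(y))² − 2y(x U_k(y) − z U_{k-1}(y))(x U_{k-1}(y) − z U_{k-2}(y)) = x² + y² + z² − 2xyz. That is, the Fricke–Vogt invariant I(x,y,z) = x² + y² + z² − 2xyz is preserved (exactly, as a polynomial identity) by T_k. -/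
import Mathlib


/-- Shifted Chebyshev polynomials of the second kind: `cheb (k+1) = U_k`. -/
def cheb : ℕ → ℝ → ℝ
  | 0, _ => 0
  | 1, _ => 1
  | n + 2, y => 2 * y * cheb (n + 1) y - cheb n y

lemma cheb_det (y : ℝ) : ∀ k : ℕ, cheb (k + 1) y ^ 2 - cheb (k + 2) y * cheb k y = 1
  | 0 => by simp [cheb]
  | k + 1 => by
    have ih := cheb_det y k
    have h : cheb (k + 3) y = 2 * y * cheb (k + 2) y - cheb (k + 1) y := rfl
    have h2 : cheb (k + 2) y = 2 * y * cheb (k + 1) y - cheb k y := rfl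
    calc cheb (k + 1 + 1) y ^ 2 - cheb (k + 1 + 2) y * cheb (k + 1) y
        = cheb (k + 2) y ^ 2 - cheb (k + 3) y * cheb (k + 1) y := rfl
      _ = 1 := by rw [h]; linear_combination ih + cheb (k + 2) y * h2

theorem stmt19 (k : ℕ) (hk : 1 ≤ k) (x y z : ℝ) :
    (x * cheb (k + 1) y - z * cheb k y) ^ 2 + y ^ 2
      + (x * cheb k y - z * cheb (k - 1) y) ^ 2
      - 2 * y * (x * cheb (k + 1) y - z * cheb k y)
          * (x * cheb k y - z * cheb (k - 1) y)
      = x ^ 2 + y ^ 2 + z ^ 2 - 2 * x * y * z := by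
  obtain ⟨m, rfl⟩ := Nat.exists_eq_add_of_le hk
  simp only [Nat.add_sub_cancel_left] at *
  have hdet := cheb_det y m
  have hrec : cheb (m + 2) y = 2 * y * cheb (m + 1) y - cheb m y := rfl
  have h1 : 1 + m + 1 = m + 2 := by ring
  have h2 : 1 + m = m + 1 := by ring
  rw [h1, h2]
  linear_combination (x ^ 2 + z ^ 2 - 2 * x * y * z) * hdet
    + (x ^ 2 * cheb (m + 2) y + z ^ 2 * cheb m y - 2 * x * z * cheb (m + 1) y) * hrec
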